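/- Let A₀ = [[a, b],[c, d]] ∈ GL₂(ℂ) and B₀ = diag(λ₁, −λ₁) satisfy A₀² = I, (A₀B₀)³ = I and b·c ≠ 0 (so (A₀,B₀) is an irreducible two-dimensional representation of PSL₂(ℤ) whose T-eigenvalue ratio equals −1). Then there is no pair (A, B) of matrices in GL₃(ℂ) with A² = I and (AB)³ = I such that B is diagonalizable, the pair (A, B) is indecomposable, and ℂ³ contains a two-dimensional subspace invariant under both A and B on which the induced action is equivalent to (A₀, B₀). -/

import Mathlib

noncomputable section
open Matrix

/-- `e(r) = exp(2πir)`. -/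
def ee (r : ℝ) : ℂ := Complex.exp (2 * Real.pi * Complex.I * r)

/-- A subspace `W` is invariant under the matrix `M` (acting by `mulVec`). -/
def Invariant {n : ℕ} (M : Matrix (Fin n) (Fin n) ℂ) (W : Submodule ℂ (Fin n → ℂ)) : Prop :=
  ∀ v ∈ W, M.mulVec v ∈ W

/-- The pair `(A, B)` is decomposable: `ℂⁿ` is the direct sum of two nonzero subspaces,
each invariant under both `A` and `B`. -/
def Decomposable {n : ℕ} (A B : Matrix (Fin n) (Fin n) ℂ) : Prop :=
  ∃ U V : Submodule ℂ (Fin n → ℂ), U ≠ ⊥ ∧ V ≠ ⊥ ∧ IsCompl U V ∧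
    Invariant A U ∧ Invariant B U ∧ Invariant A V ∧ Invariant B V

/-- The pair `(A, B)` is indecomposable. -/
def Indecomposable {n : ℕ} (A B : Matrix (Fin n) (Fin n) ℂ) : Prop :=
  ¬ Decomposable A B

/-- `(A, B)` and `(A', B')` are simultaneously conjugate:
`P A P⁻¹ = A'` and `P B P⁻¹ = B'` for a single invertible `P`. -/
def SimConj {n : ℕ} (A B A' B' : Matrix (Fin n) (Fin n) ℂ) : Prop :=
  ∃ P : Matrix (Fin n) (Fin n) ℂ, IsUnit P ∧ P * A = A' * P ∧ P * B = B' * P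

/-- `M` is diagonalizable over `ℂ`. -/
def IsDiagonalizable {n : ℕ} (M : Matrix (Fin n) (Fin n) ℂ) : Prop :=
  ∃ P : Matrix (Fin n) (Fin n) ℂ, IsUnit P ∧ ∃ d : Fin n → ℂ, P * M = Matrix.diagonal d * P

theorem facts2 (a b c l1 : ℂ) (hA02 : (!![a,b;c,-a])^2 = 1)
    (hAB03 : (!![a,b;c,-a] * diagonal ![l1,-l1])^3 = 1) (hb : b ≠ 0) :
    a^2 + b*c = 1 ∧ 4*a^2 = 1 ∧ 2*a*l1^3 = -1 := by
  have hD : (diagonal ![l1,-l1] : Matrix (Fin 2) (Fin 2) ℂ) = !![l1,0;0,-l1] := by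
    ext i j; fin_cases i <;> fin_cases j <;> simp [Matrix.diagonal]
  rw [hD] at hAB03
  have e00 := congrFun (congrFun hA02 0) 0
  simp [pow_two, Matrix.mul_apply, Fin.sum_univ_two] at e00
  have h1 : a^2 + b*c = 1 := by linear_combination e00
  have f00 := congrFun (congrFun hAB03 0) 0
  have f01 := congrFun (congrFun hAB03 0) 1
  simp [pow_succ, Matrix.mul_apply, Fin.sum_univ_two] at f00 f01
  have hl1 : l1 ≠ 0 := by
    intro h; rw [h] at f00; ring_nf at f00; exact one_ne_zero f00.symm
  have h2 : l1^3 * (b * (3*a^2 - b*c)) = 0 := by linear_combination -f01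
  have h3 : b*c = 3*a^2 := by
    rcases mul_eq_zero.mp h2 with h | h
    · exact absurd h (pow_ne_zero 3 hl1)
    · rcases mul_eq_zero.mp h with h | h
      · exact absurd h hb
      · linear_combination -h
  have h4 : 4*a^2 = 1 := by linear_combination h1 - h3
  refine ⟨h1, h4, ?_⟩
  linear_combination -f00 - 3*l1^3*a*h3 - 2*a*l1^3*h4

theorem keyScalar (a b c l1 p q r m : ℂ) (hb : b ≠ 0) (hc : c ≠ 0)
    (hq0 : a^2 + b*c = 1) (hq1 : 4*a^2 = 1) (hq2 : 2*a*l1^3 = -1)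
    (hE1 : p*(a+r) + q*b = 0) (hE2 : p*c - q*a + r*q = 0) (hE3 : r*r = 1)
    (hG3 : m^3 * r^3 = 1)
    (hG1 : a*l1*(m*(p*a*l1 - q*b*l1 + m*r*p)) - b*l1*(m*(p*c*l1 + q*a*l1 + m*r*q)) + m*p*(m^2*r^2) = 0)
    (hG2 : c*l1*(m*(p*a*l1 - q*b*l1 + m*r*p)) + a*l1*(m*(p*c*l1 + q*a*l1 + m*r*q)) + m*q*(m^2*r^2) = 0) :
    ∃ s t : ℂ, s*l1 = m*s ∧ t*(-l1) = m*t ∧ s*a + t*b + p = r*s ∧ s*c + t*(-a) + q = r*t := by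
  have hm3r : m^3*r = 1 := by linear_combination hG3 - m^3*r*hE3
  have hm : m ≠ 0 := by intro h; rw [h] at hm3r; simp at hm3r
  have ha : a ≠ 0 := by intro h; rw [h] at hq1; norm_num at hq1
  have hl1 : l1 ≠ 0 := by intro h; rw [h] at hq2; norm_num at hq2
  have hm3 : m^3 = r := by linear_combination r*hm3r - m^3*hE3
  have hl13 : l1^3 = -(2*a) := by linear_combination 2*a*hq2 - l1^3*hq1
  have hcp : m*((2*a*r*l1^2 + l1*m*r*(2*a+r) + m^2)*p) = 0 := by
    linear_combination hG1 + m*(2*a*l1^2 + l1*m*r)*hE1 - m^3*p*hE3 + m*l1^2*p*hq0 - m*l1^2*p*hq1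
  have hcq : m*((m^2 + l1*m*(2*a*r-1) - 2*a*r*l1^2)*q) = 0 := by
    linear_combination hG2 - m*(2*a*l1^2 + l1*m*r)*hE2 - m^3*q*hE3 + m^2*l1*q*hE3 + m*l1^2*q*hq0 - m*l1^2*q*hq1
  have hcp' : (2*a*r*l1^2 + l1*m*r*(2*a+r) + m^2)*p = 0 := (mul_eq_zero.mp hcp).resolve_left hm
  have hcq' : (m^2 + l1*m*(2*a*r-1) - 2*a*r*l1^2)*q = 0 := (mul_eq_zero.mp hcq).resolve_left hm
  have hrr : (r - 2*a)*(r + 2*a) = 0 := by linear_combination hE3 - hq1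
  rcases mul_eq_zero.mp hrr with h | h
  · have hr : r = 2*a := by linear_combination h
    subst hr
    have hml : m ≠ l1 := by
      intro h'; subst h'
      have : (4:ℂ)*a = 0 := by linear_combination hl13 - hm3
      simp at this; exact ha this
    by_cases hm' : m = -l1
    · refine ⟨0, -p*b⁻¹, by ring, by rw [hm']; ring, ?_, ?_⟩
      · field_simp
        ring
      · field_simp
        linear_combination hE1
    · have hp : p = 0 := by
        have h1 : (l1+m)^2*p = 0 := by
          linear_combination hcp' - (l1^2+2*l1*m)*p*hq1
        have h2 : l1 + m ≠ 0 := fun hx => hm' (by linear_combination hx)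
        simpa [pow_eq_zero_iff, h2] using (mul_eq_zero.mp h1).resolve_left (pow_ne_zero 2 h2)
      have hq : q = 0 := by
        have h1 : ((m-l1)*(m+l1))*q = 0 := by
          linear_combination hcq' + l1^2*q*hq1 - l1*m*q*hq1
        have h2 : m - l1 ≠ 0 := sub_ne_zero.mpr hml
        have h3 : m + l1 ≠ 0 := fun hx => hm' (by linear_combination hx)
        exact (mul_eq_zero.mp h1).resolve_left (mul_ne_zero h2 h3)
      exact ⟨0, 0, by ring, by ring, by rw [hp]; ring, by rw [hq]; ring⟩
  · have hr : r = -(2*a) := by linear_combination h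
    subst hr
    have hml : m ≠ -l1 := by
      intro h'; subst h'
      have : (4:ℂ)*a = 0 := by linear_combination hl13 + hm3
      simp at this; exact ha this
    by_cases hm' : m = l1
    · refine ⟨-q*c⁻¹, 0, by rw [hm']; ring, by ring, ?_, ?_⟩
      · field_simp
        linear_combination hE2
      · field_simp
        ring
    · have hp : p = 0 := by
        have h1 : ((m-l1)*(m+l1))*p = 0 := by
          linear_combination hcp' + l1^2*p*hq1
        have h2 : m - l1 ≠ 0 := sub_ne_zero.mpr hm'
        have h3 : m + l1 ≠ 0 := fun hx => hml (by linear_combination hx)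
        exact (mul_eq_zero.mp h1).resolve_left (mul_ne_zero h2 h3)
      have hq : q = 0 := by
        have h1 : (m-l1)^2*q = 0 := by
          linear_combination hcq' + (l1*m - l1^2)*q*hq1
        have h2 : m - l1 ≠ 0 := sub_ne_zero.mpr hm'
        exact (mul_eq_zero.mp h1).resolve_left (pow_ne_zero 2 h2)
      exact ⟨0, 0, by ring, by ring, by rw [hp]; ring, by rw [hq]; ring⟩


/-- if `(A₀, B₀)` is an irreducible two-dimensional pair with
`B₀ = diag(λ₁, −λ₁)` (T-eigenvalue ratio `−1`), then there is no indecomposable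
three-dimensional pair `(A, B)` with `B` diagonalizable admitting a two-dimensional
invariant subspace on which the induced action is equivalent to `(A₀, B₀)`. -/
theorem stmt_3 (a b c d l1 : ℂ)
    (A0 : Matrix (Fin 2) (Fin 2) ℂ) (hA0 : A0 = !![a, b; c, d])
    (B0 : Matrix (Fin 2) (Fin 2) ℂ) (hB0 : B0 = Matrix.diagonal ![l1, -l1])
    (hA02 : A0 ^ 2 = 1) (hAB03 : (A0 * B0) ^ 3 = 1) (hbc : b * c ≠ 0) :
    ¬ ∃ A B : Matrix (Fin 3) (Fin 3) ℂ, A ^ 2 = 1 ∧ (A * B) ^ 3 = 1 ∧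
      IsDiagonalizable B ∧ Indecomposable A B ∧
      ∃ ι : (Fin 2 → ℂ) →ₗ[ℂ] (Fin 3 → ℂ), Function.Injective ι ∧
        (∀ v, A.mulVec (ι v) = ι (A0.mulVec v)) ∧
        (∀ v, B.mulVec (ι v) = ι (B0.mulVec v)) := by
  rintro ⟨A, B, hA2, hAB3, ⟨P, hPu, dd, hPB⟩, hIndec, ι, hinj, hιA, hιB⟩
  have hb : b ≠ 0 := fun h => hbc (by rw [h]; ring)
  have hc : c ≠ 0 := fun h => hbc (by rw [h]; ring)
  have hd : d = -a := by
    have h := hA02; rw [hA0] at h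
    have e01 := congrFun (congrFun h 0) 1
    simp [pow_two, Matrix.mul_apply, Fin.sum_univ_two] at e01
    rcases mul_eq_zero.mp (show b*(a+d) = 0 by linear_combination e01) with h' | h'
    · exact absurd h' hb
    · linear_combination h'
  subst hd
  subst hA0; subst hB0
  obtain ⟨hq0, hq1, hq2⟩ := facts2 a b c l1 hA02 hAB03 hb
  set w1 : Fin 3 → ℂ := ι ![1,0] with hw1def
  set w2 : Fin 3 → ℂ := ι ![0,1] with hw2def
  set W : Submodule ℂ (Fin 3 → ℂ) := LinearMap.range ι with hWdef
  have hw1W : w1 ∈ W := ⟨![1,0], rfl⟩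
  have hw2W : w2 ∈ W := ⟨![0,1], rfl⟩
  have hWrank : Module.finrank ℂ W = 2 := by
    rw [hWdef, LinearMap.finrank_range_of_inj hinj, Module.finrank_fin_fun]
  -- images of basis of the invariant plane
  have hAw1 : A.mulVec w1 = a • w1 + c • w2 := by
    rw [hw1def, hιA]
    rw [show (!![a,b;c,-a]).mulVec ![1,0] = a • ![1,0] + c • ![0,1] from by
      funext i; fin_cases i <;> simp [Matrix.mulVec, dotProduct, Fin.sum_univ_two]]
    rw [map_add, _root_.map_smul, _root_.map_smul]
  have hAw2 : A.mulVec w2 = b • w1 + (-a) • w2 := by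
    rw [hw2def, hιA]
    rw [show (!![a,b;c,-a]).mulVec ![0,1] = b • ![1,0] + (-a) • ![0,1] from by
      funext i; fin_cases i <;> simp [Matrix.mulVec, dotProduct, Fin.sum_univ_two]]
    rw [map_add, _root_.map_smul, _root_.map_smul]
  have hBw1 : B.mulVec w1 = l1 • w1 := by
    rw [hw1def, hιB]
    rw [show (diagonal ![l1,-l1]).mulVec ![1,0] = l1 • ![1,0] from by
      funext i; fin_cases i <;> simp [Matrix.mulVec, dotProduct, Fin.sum_univ_two, Matrix.diagonal]]
    rw [_root_.map_smul]
  have hBw2 : B.mulVec w2 = (-l1) • w2 := by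
    rw [hw2def, hιB]
    rw [show (diagonal ![l1,-l1]).mulVec ![0,1] = (-l1) • ![0,1] from by
      funext i; fin_cases i <;> simp [Matrix.mulVec, dotProduct, Fin.sum_univ_two, Matrix.diagonal]]
    rw [_root_.map_smul]
  -- an eigenvector of B outside W
  have hPdet : IsUnit P.det := (Matrix.isUnit_iff_isUnit_det P).mp hPu
  have hBfull : B = P⁻¹ * Matrix.diagonal dd * P := by
    calc B = (P⁻¹*P)*B := by rw [Matrix.nonsing_inv_mul _ hPdet, one_mul]
    _ = P⁻¹*(P*B) := by rw [mul_assoc]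
    _ = P⁻¹*(Matrix.diagonal dd*P) := by rw [hPB]
    _ = P⁻¹ * Matrix.diagonal dd * P := by rw [mul_assoc]
  have hBP : B * P⁻¹ = P⁻¹ * Matrix.diagonal dd := by
    rw [hBfull, mul_assoc, Matrix.mul_nonsing_inv _ hPdet, mul_one]
  have hBv0 : ∀ j : Fin 3, B.mulVec ((P⁻¹).mulVec (Pi.single j 1)) =
      dd j • (P⁻¹).mulVec (Pi.single j 1) := by
    intro j
    rw [Matrix.mulVec_mulVec, hBP, ← Matrix.mulVec_mulVec, Matrix.diagonal_mulVec_single]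
    have hsingle : (Pi.single j (dd j * 1) : Fin 3 → ℂ) = dd j • (Pi.single j 1 : Fin 3 → ℂ) := by
      funext i
      simp [Pi.single_apply, Pi.smul_apply]
    rw [hsingle, Matrix.mulVec_smul]
  have hex : ∃ j : Fin 3, (P⁻¹).mulVec (Pi.single j 1) ∉ W := by
    by_contra hall
    push_neg at hall
    have hWtop : ∀ y : Fin 3 → ℂ, y ∈ W := by
      intro y
      have hy : y = (P⁻¹).mulVec (P.mulVec y) := by
        rw [Matrix.mulVec_mulVec, Matrix.nonsing_inv_mul _ hPdet, Matrix.one_mulVec]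
      have hexp : P.mulVec y = ∑ j, (P.mulVec y j) • (Pi.single j 1 : Fin 3 → ℂ) := by
        funext i
        rw [Finset.sum_apply]
        simp [Pi.single_apply]
      rw [hy, hexp]
      rw [show (P⁻¹).mulVec (∑ j, (P.mulVec y j) • (Pi.single j 1 : Fin 3 → ℂ))
          = ∑ j, (P.mulVec y j) • (P⁻¹).mulVec (Pi.single j 1) from by
        rw [← Matrix.mulVecLin_apply]; simp only [map_sum, _root_.map_smul, Matrix.mulVecLin_apply]]
      exact Submodule.sum_mem _ (fun j _ => Submodule.smul_mem _ _ (hall j))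
    have : W = ⊤ := Submodule.eq_top_iff'.mpr hWtop
    rw [this] at hWrank
    rw [finrank_top, Module.finrank_fin_fun] at hWrank
    norm_num at hWrank
  obtain ⟨j, hv⟩ := hex
  set v : Fin 3 → ℂ := (P⁻¹).mulVec (Pi.single j 1) with hvdef
  set m : ℂ := dd j with hmdef
  have hBv : B.mulVec v = m • v := hBv0 j
  -- linear independence of w1, w2, v
  have hli : LinearIndependent ℂ ![w1, w2, v] := by
    rw [Fintype.linearIndependent_iff]
    intro g hg
    have hg' : g 0 • w1 + g 1 • w2 + g 2 • v = 0 := by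
      simpa [Fin.sum_univ_three] using hg
    have hg2 : g 2 = 0 := by
      by_contra hne
      apply hv
      have hmem : g 2 • v ∈ W := by
        have h0 : g 2 • v = -(g 0 • w1) - g 1 • w2 := by
          linear_combination (norm := module) hg'
        rw [h0]
        exact Submodule.sub_mem _ (Submodule.neg_mem _ (Submodule.smul_mem _ _ hw1W))
          (Submodule.smul_mem _ _ hw2W)
      have := Submodule.smul_mem W (g 2)⁻¹ hmem
      rwa [inv_smul_smul₀ hne] at this
    have hg01 : ι (g 0 • ![1,0] + g 1 • ![0,1]) = 0 := by
      rw [map_add, _root_.map_smul, _root_.map_smul]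
      rw [hg2] at hg'
      linear_combination (norm := module) hg'
    have hz := hinj (hg01.trans (map_zero ι).symm)
    intro i
    fin_cases i
    · simpa using congrFun hz 0
    · simpa using congrFun hz 1
    · exact hg2
  have hcard : Fintype.card (Fin 3) = Module.finrank ℂ (Fin 3 → ℂ) := by
    simp [Module.finrank_fin_fun]
  let b3 : Module.Basis (Fin 3) ℂ (Fin 3 → ℂ) := basisOfLinearIndependentOfCardEqFinrank hli hcard
  have hb3 : ⇑b3 = ![w1, w2, v] := coe_basisOfLinearIndependentOfCardEqFinrank hli hcard
  set p : ℂ := b3.repr (A.mulVec v) 0 with hpdef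
  set q : ℂ := b3.repr (A.mulVec v) 1 with hqdef
  set r : ℂ := b3.repr (A.mulVec v) 2 with hrdef
  have hAv : A.mulVec v = p • w1 + q • w2 + r • v := by
    have h := b3.sum_repr (A.mulVec v)
    rw [Fin.sum_univ_three] at h
    rw [hb3] at h
    simpa using h.symm
  have huniq : ∀ x0 x1 x2 y0 y1 y2 : ℂ,
      x0 • w1 + x1 • w2 + x2 • v = y0 • w1 + y1 • w2 + y2 • v →
      x0 = y0 ∧ x1 = y1 ∧ x2 = y2 := by
    intro x0 x1 x2 y0 y1 y2 hxy
    have h0 := Fintype.linearIndependent_iff.mp hli ![x0-y0, x1-y1, x2-y2] (by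
      rw [Fin.sum_univ_three]
      simp only [Matrix.cons_val_zero, Matrix.cons_val_one, Matrix.head_cons,
        Matrix.cons_val_two, Matrix.tail_cons]
      linear_combination (norm := module) hxy)
    refine ⟨?_, ?_, ?_⟩
    · have := h0 0; simp at this; linear_combination this
    · have := h0 1; simp at this; linear_combination this
    · have := h0 2; simp at this; linear_combination this
  -- E equations
  have hA2v : A.mulVec (A.mulVec v) = v := by
    rw [Matrix.mulVec_mulVec, ← pow_two, hA2, Matrix.one_mulVec]
  have hexpE : A.mulVec (A.mulVec v) =
      (p*a + q*b + r*p) • w1 + (p*c + q*(-a) + r*q) • w2 + (r*r) • v := by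
    rw [hAv, Matrix.mulVec_add, Matrix.mulVec_add, Matrix.mulVec_smul,
      Matrix.mulVec_smul, Matrix.mulVec_smul, hAw1, hAw2, hAv]
    module
  obtain ⟨hE1, hE2, hE3⟩ := huniq _ _ _ _ _ _
    (show (p*a + q*b + r*p) • w1 + (p*c + q*(-a) + r*q) • w2 + (r*r) • v
        = (0:ℂ) • w1 + (0:ℂ) • w2 + (1:ℂ) • v from by
      rw [← hexpE, hA2v]; module)
  -- G equations
  have hABw1 : (A*B).mulVec w1 = (a*l1) • w1 + (c*l1) • w2 := by
    rw [← Matrix.mulVec_mulVec, hBw1, Matrix.mulVec_smul, hAw1]; module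
  have hABw2 : (A*B).mulVec w2 = (-(b*l1)) • w1 + (a*l1) • w2 := by
    rw [← Matrix.mulVec_mulVec, hBw2, Matrix.mulVec_smul, hAw2]; module
  have hABv : (A*B).mulVec v = (m*p) • w1 + (m*q) • w2 + (m*r) • v := by
    rw [← Matrix.mulVec_mulVec, hBv, Matrix.mulVec_smul, hAv]; module
  have hab2 : (A*B).mulVec ((A*B).mulVec v) =
      ((m*p)*(a*l1) + (m*q)*(-(b*l1)) + (m*r)*(m*p)) • w1 +
      ((m*p)*(c*l1) + (m*q)*(a*l1) + (m*r)*(m*q)) • w2 + ((m*r)*(m*r)) • v := by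
    rw [hABv, Matrix.mulVec_add, Matrix.mulVec_add, Matrix.mulVec_smul,
      Matrix.mulVec_smul, Matrix.mulVec_smul, hABw1, hABw2, hABv]
    module
  have hab3 : (A*B).mulVec ((A*B).mulVec ((A*B).mulVec v)) =
      (((m*p)*(a*l1) + (m*q)*(-(b*l1)) + (m*r)*(m*p))*(a*l1) +
        ((m*p)*(c*l1) + (m*q)*(a*l1) + (m*r)*(m*q))*(-(b*l1)) + ((m*r)*(m*r))*(m*p)) • w1 +
      (((m*p)*(a*l1) + (m*q)*(-(b*l1)) + (m*r)*(m*p))*(c*l1) +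
        ((m*p)*(c*l1) + (m*q)*(a*l1) + (m*r)*(m*q))*(a*l1) + ((m*r)*(m*r))*(m*q)) • w2 +
      (((m*r)*(m*r))*(m*r)) • v := by
    rw [hab2, Matrix.mulVec_add, Matrix.mulVec_add, Matrix.mulVec_smul,
      Matrix.mulVec_smul, Matrix.mulVec_smul, hABw1, hABw2, hABv]
    module
  have hab3v : (A*B).mulVec ((A*B).mulVec ((A*B).mulVec v)) = v := by
    rw [Matrix.mulVec_mulVec, Matrix.mulVec_mulVec,
      show A*B*(A*B)*(A*B) = (A*B)^3 from by rw [pow_succ, pow_two], hAB3,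
      Matrix.one_mulVec]
  obtain ⟨hG1r, hG2r, hG3r⟩ := huniq _ _ _ _ _ _ (hab3.symm.trans hab3v |>.trans
    (show v = (0:ℂ) • w1 + (0:ℂ) • w2 + (1:ℂ) • v from by module))
  -- apply the scalar lemma
  obtain ⟨s, t, hF1, hF2, hF3, hF4⟩ := keyScalar a b c l1 p q r m hb hc hq0 hq1 hq2
    (by linear_combination hE1) (by linear_combination hE2) (by linear_combination hE3)
    (by linear_combination hG3r) (by linear_combination hG1r) (by linear_combination hG2r)
  -- the complementary line
  set v' : Fin 3 → ℂ := v + s • w1 + t • w2 with hv'def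
  have hBv' : B.mulVec v' = m • v' := by
    rw [hv'def, Matrix.mulVec_add, Matrix.mulVec_add, Matrix.mulVec_smul,
      Matrix.mulVec_smul, hBv, hBw1, hBw2, smul_smul, smul_smul, hF1, hF2]
    module
  have hAv' : A.mulVec v' = r • v' := by
    rw [hv'def, Matrix.mulVec_add, Matrix.mulVec_add, Matrix.mulVec_smul,
      Matrix.mulVec_smul, hAv, hAw1, hAw2]
    match_scalars
    · linear_combination hF3
    · linear_combination hF4
    · ring
  have hv'ne : v' ≠ 0 := by
    intro h0
    apply hv
    have hveq : v = -(s • w1) - t • w2 := by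
      rw [hv'def] at h0
      linear_combination (norm := module) h0
    rw [hveq]
    exact Submodule.sub_mem _ (Submodule.neg_mem _ (Submodule.smul_mem _ _ hw1W))
      (Submodule.smul_mem _ _ hw2W)
  have hvW' : v' ∉ W := by
    intro hmem
    apply hv
    have : v = v' - s • w1 - t • w2 := by rw [hv'def]; module
    rw [this]
    exact Submodule.sub_mem _ (Submodule.sub_mem _ hmem (Submodule.smul_mem _ _ hw1W))
      (Submodule.smul_mem _ _ hw2W)
  set V : Submodule ℂ (Fin 3 → ℂ) := Submodule.span ℂ {v'} with hVdef
  have hdis : Disjoint W V := by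
    rw [Submodule.disjoint_def]
    intro x hxW hxV
    rw [hVdef, Submodule.mem_span_singleton] at hxV
    obtain ⟨k, rfl⟩ := hxV
    by_cases hk : k = 0
    · rw [hk, zero_smul]
    · exfalso
      apply hvW'
      have := Submodule.smul_mem W k⁻¹ hxW
      rwa [inv_smul_smul₀ hk] at this
  have hVrank : Module.finrank ℂ V = 1 := finrank_span_singleton hv'ne
  have hsup : W ⊔ V = ⊤ := by
    apply Submodule.eq_top_of_finrank_eq
    have h1 := Submodule.finrank_sup_add_finrank_inf_eq W V
    rw [hdis.eq_bot, finrank_bot, add_zero, hWrank, hVrank] at h1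
    rw [h1, Module.finrank_fin_fun]
  refine hIndec ⟨W, V, ?_, ?_, ⟨hdis, codisjoint_iff.mpr hsup⟩, ?_, ?_, ?_, ?_⟩
  · intro hbot
    have hw1ne : w1 ≠ 0 := by
      intro h0
      have := hinj (h0.trans (map_zero ι).symm)
      simpa using congrFun this 0
    rw [hbot] at hw1W
    exact hw1ne (by simpa using hw1W)
  · intro hbot
    rw [hVdef, Submodule.span_singleton_eq_bot] at hbot
    exact hv'ne hbot
  · rintro x ⟨y, rfl⟩
    exact ⟨(!![a,b;c,-a]).mulVec y, (hιA y).symm⟩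
  · rintro x ⟨y, rfl⟩
    exact ⟨(diagonal ![l1,-l1]).mulVec y, (hιB y).symm⟩
  · intro x hx
    rw [hVdef, Submodule.mem_span_singleton] at hx ⊢
    obtain ⟨k, rfl⟩ := hx
    exact ⟨k * r, by rw [Matrix.mulVec_smul, hAv', smul_smul]⟩
  · intro x hx
    rw [hVdef, Submodule.mem_span_singleton] at hx ⊢
    obtain ⟨k, rfl⟩ := hx
    exact ⟨k * m, by rw [Matrix.mulVec_smul, hBv', smul_smul]⟩
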